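/- For every λ ∈ ℝ with λ ≠ 0, the operator H_{0λ} has exactly one even eigenvalue ζ(λ) outside [0,2] (i.e. there is exactly one real z with z < 0 or z > 2 that is an even eigenvalue); moreover ζ(λ) ∈ (2, +∞) if λ > 0, and ζ(λ) ∈ (−∞, 0) if λ < 0. -/

import Mathlib

open MeasureTheory Real Filter Topology

/-- The potential `v(0) = μ`, `v(±1) = λ/2`, `v(x) = 0` for `|x| > 1`. -/
noncomputable def pot (μ lam : ℝ) (x : ℤ) : ℝ :=
  if x = 0 then μ else if x = 1 ∨ x = -1 then lam / 2 else 0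

/-- A real number `z` is an *even eigenvalue* of the discrete Schrödinger operator
`H_{μλ}` on `ℓ²(ℤ; ℂ)`, `(H_{μλ}ψ)(x) = ψ(x) − (ψ(x+1) + ψ(x−1))/2 + v(x)ψ(x)`,
if there is a nonzero even `ψ ∈ ℓ²(ℤ; ℂ)` with `H_{μλ}ψ = zψ`. -/
def IsEvenEigenvalue (μ lam z : ℝ) : Prop :=
  ∃ ψ : lp (fun _ : ℤ => ℂ) 2, ψ ≠ 0 ∧ (∀ x : ℤ, ψ (-x) = ψ x) ∧
    ∀ x : ℤ, ψ x - (ψ (x + 1) + ψ (x - 1)) / 2 + (pot μ lam x : ℂ) * ψ x = (z : ℂ) * ψ x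

lemma root_exists (lam : ℝ) (hlam : lam ≠ 0) :
    ∃ r : ℝ, r ≠ 0 ∧ |r| < 1 ∧ lam * r * (r^2+1) = r^2 - 1 := by
  have hc : Continuous fun r : ℝ => lam * r * (r^2+1) - r^2 + 1 := by continuity
  rcases lt_or_gt_of_ne hlam with h | h
  · have h01 : (0:ℝ) ≤ 1 := by norm_num
    have := intermediate_value_Icc' h01 (hc.continuousOn)
    have h0 : (0:ℝ) ∈ Set.Icc (lam * 1 * (1^2+1) - 1^2 + 1) (lam * 0 * (0^2+1) - 0^2 + 1) := by
      constructor <;> nlinarith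
    obtain ⟨r, hr, hr0⟩ := this h0
    simp only at hr0
    refine ⟨r, ?_, ?_, by linarith⟩
    · rintro rfl; norm_num at hr0
    · rw [abs_lt]
      rcases hr with ⟨h1, h2⟩
      refine ⟨by linarith, lt_of_le_of_ne h2 ?_⟩
      rintro rfl; nlinarith
  · have h01 : (-1:ℝ) ≤ 0 := by norm_num
    have := intermediate_value_Icc h01 (hc.continuousOn)
    have h0 : (0:ℝ) ∈ Set.Icc (lam * (-1) * ((-1)^2+1) - (-1)^2 + 1) (lam * 0 * (0^2+1) - 0^2 + 1) := by
      constructor <;> nlinarith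
    obtain ⟨r, hr, hr0⟩ := this h0
    simp only at hr0
    refine ⟨r, ?_, ?_, by linarith⟩
    · rintro rfl; norm_num at hr0
    · rw [abs_lt]
      rcases hr with ⟨h1, h2⟩
      refine ⟨lt_of_le_of_ne h1 ?_, by linarith⟩
      rintro rfl; nlinarith

lemma root_unique {lam r s : ℝ} (hr : |r| < 1) (hs : |s| < 1)
    (h1 : lam * r * (r^2+1) = r^2 - 1) (h2 : lam * s * (s^2+1) = s^2 - 1) : r = s := by
  obtain ⟨hr1, hr2⟩ := abs_lt.1 hr
  obtain ⟨hs1, hs2⟩ := abs_lt.1 hs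
  have key : (r - s) * ((r+s)^2 + 1 - r^2*s^2) = 0 := by
    linear_combination r*(r^2+1)*h2 - s*(s^2+1)*h1
  have hrr : r^2 < 1 := by nlinarith
  have hss : s^2 < 1 := by nlinarith
  have pos : 0 < (r+s)^2 + 1 - r^2*s^2 := by
    nlinarith [sq_nonneg (r+s), mul_pos (by linarith : (0:ℝ) < 1 - r^2) (by linarith : (0:ℝ) < 1 - s^2)]
  rcases mul_eq_zero.1 key with h | h
  · linarith
  · linarith

lemma pot_even (μ lam : ℝ) (x : ℤ) : pot μ lam (-x) = pot μ lam x := by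
  unfold pot
  have h0 : -x = 0 ↔ x = 0 := by omega
  have h1 : (-x = 1 ∨ -x = -1) ↔ (x = 1 ∨ x = -1) := by omega
  simp only [h0, h1]

lemma construct (lam r : ℝ) (hr0 : r ≠ 0) (hr : |r| < 1)
    (heq : lam * r * (r^2+1) = r^2 - 1) :
    IsEvenEigenvalue 0 lam (1 - (r + r⁻¹)/2) := by
  obtain ⟨hrl, hru⟩ := abs_lt.1 hr
  obtain ⟨z, hzdef⟩ : ∃ z : ℝ, z = 1 - (r + r⁻¹)/2 := ⟨_, rfl⟩
  rw [← hzdef]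
  have hz : r^2 + 1 = 2*(1-z)*r := by
    rw [hzdef]; field_simp; ring
  set Φ : ℤ → ℝ := fun x => if x = 0 then 2*r^2 else (1+r^2)*r^(x.natAbs) with hΦ
  -- summability
  have hr2 : r^2 < 1 := by nlinarith
  have hgeo : Summable fun n : ℕ => (r^2)^n := summable_geometric_of_lt_one (by positivity) hr2
  have hbound : ∀ x : ℤ, ‖((Φ x : ℂ))‖ ^ 2 ≤ (1+r^2)^2 * (r^2)^(x.natAbs) := by
    intro x
    rw [Complex.norm_real, Real.norm_eq_abs, sq_abs]
    by_cases h : x = 0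
    · subst h
      simp only [hΦ, if_pos rfl, Int.natAbs_zero, pow_zero, mul_one]
      nlinarith
    · simp only [hΦ, if_neg h]
      rw [mul_pow, ← pow_mul, ← pow_mul, mul_comm (x.natAbs) 2, pow_mul]
  have hsum2 : Summable fun x : ℤ => (1+r^2)^2 * (r^2)^(x.natAbs) := by
    apply Summable.of_nat_of_neg_add_one
    · simpa using hgeo.mul_left ((1+r^2)^2)
    · have : ∀ n : ℕ, (1+r^2)^2 * (r^2)^((-(n+1) : ℤ).natAbs) = ((1+r^2)^2 * r^2) * (r^2)^n := by
        intro n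
        have : ((-(n+1) : ℤ)).natAbs = n + 1 := by omega
        rw [this, pow_succ]
        ring
      rw [funext this]
      exact hgeo.mul_left _
  have hmem : Memℓp (fun x : ℤ => (Φ x : ℂ)) 2 := by
    apply memℓp_gen
    have h2 : ((2 : ENNReal)).toReal = (2:ℝ) := by norm_num
    rw [h2]
    have he : (fun x : ℤ => ‖((Φ x : ℂ))‖ ^ (2:ℝ)) = fun x : ℤ => ‖((Φ x : ℂ))‖ ^ (2:ℕ) := by
      funext x; rw [← Real.rpow_natCast]; norm_num
    rw [he]
    exact Summable.of_nonneg_of_le (fun x => by positivity) hbound hsum2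
  set ψ : lp (fun _ : ℤ => ℂ) 2 := ⟨fun x => (Φ x : ℂ), hmem⟩ with hψ
  have hcoe : ∀ x : ℤ, ψ x = (Φ x : ℂ) := fun x => rfl
  have hΦeven : ∀ x : ℤ, Φ (-x) = Φ x := by
    intro x
    simp only [hΦ, neg_eq_zero, Int.natAbs_neg]
  refine ⟨ψ, ?_, ?_, ?_⟩
  · intro h0
    have h1 : ψ 1 = 0 := by rw [h0]; exact congrFun (lp.coeFn_zero _ _) 1
    rw [hcoe] at h1
    have : Φ 1 = 0 := Complex.ofReal_eq_zero.mp h1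
    simp only [hΦ] at this
    norm_num at this
    rcases this with h | h
    · nlinarith
    · exact hr0 h
  · intro x; rw [hcoe, hcoe, hΦeven]
  · -- eigen equation
    have key : ∀ x : ℤ, 0 ≤ x →
        Φ x - (Φ (x+1) + Φ (x-1))/2 + pot 0 lam x * Φ x = z * Φ x := by
      intro x hx
      rcases eq_or_lt_of_le hx with h0 | h0
      · -- x = 0
        have hx0 : x = 0 := h0.symm
        subst hx0
        have e1 : Φ 0 = 2*r^2 := by simp [hΦ]
        have e2 : Φ 1 = (1+r^2)*r := by norm_num [hΦ]
        have e3 : Φ (-1) = (1+r^2)*r := by norm_num [hΦ]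
        have e4 : pot 0 lam 0 = 0 := by simp [pot]
        rw [show (0:ℤ)+1 = 1 by ring, show (0:ℤ)-1 = -1 by ring, e1, e2, e3, e4]
        linear_combination (-r)*hz
      · rcases eq_or_lt_of_le (show (1:ℤ) ≤ x by omega) with h1 | h1
        · -- x = 1
          have hx1 : x = 1 := h1.symm
          subst hx1
          have e1 : Φ 1 = (1+r^2)*r := by norm_num [hΦ]
          have e2 : Φ 2 = (1+r^2)*r^2 := by norm_num [hΦ]
          have e3 : Φ 0 = 2*r^2 := by simp [hΦ]
          have e4 : pot 0 lam 1 = lam/2 := by norm_num [pot]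
          rw [show (1:ℤ)+1 = 2 by ring, show (1:ℤ)-1 = 0 by ring, e1, e2, e3, e4]
          linear_combination (1/2)*heq - ((1+r^2)/2)*hz
        · -- x ≥ 2
          obtain ⟨k, hk⟩ : ∃ k : ℕ, x = (k:ℤ) + 2 := ⟨(x-2).toNat, by omega⟩
          subst hk
          have n1 : ((k:ℤ)+2).natAbs = k+2 := by omega
          have n2 : ((k:ℤ)+2+1).natAbs = k+3 := by omega
          have n3 : ((k:ℤ)+2-1).natAbs = k+1 := by omega
          have e1 : Φ ((k:ℤ)+2) = (1+r^2)*r^(k+2) := by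
            simp only [hΦ, n1, if_neg (by omega : ¬((k:ℤ)+2 = 0))]
          have e2 : Φ ((k:ℤ)+2+1) = (1+r^2)*r^(k+3) := by
            simp only [hΦ, n2, if_neg (by omega : ¬((k:ℤ)+2+1 = 0))]
          have e3 : Φ ((k:ℤ)+2-1) = (1+r^2)*r^(k+1) := by
            simp only [hΦ, n3, if_neg (by omega : ¬((k:ℤ)+2-1 = 0))]
          have e4 : pot 0 lam ((k:ℤ)+2) = 0 := by
            unfold pot
            rw [if_neg (by omega), if_neg (by omega)]
          rw [e1, e2, e3, e4]
          have expand : r^(k+2) = r^(k+1) * r := by ring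
          have expand3 : r^(k+3) = r^(k+1) * r^2 := by ring
          rw [expand, expand3]
          linear_combination (-(1:ℝ)/2)*(1+r^2)*r^(k+1)*hz
    have all : ∀ x : ℤ, Φ x - (Φ (x+1) + Φ (x-1))/2 + pot 0 lam x * Φ x = z * Φ x := by
      intro x
      rcases le_or_gt 0 x with h | h
      · exact key x h
      · have hx := key (-x) (by omega)
        rw [show -x+1 = -(x-1) by ring, show -x-1 = -(x+1) by ring,
          hΦeven, hΦeven, hΦeven, pot_even] at hx
        linarith
    intro x
    rw [hcoe, hcoe, hcoe]
    have h := congrArg (fun t : ℝ => (t : ℂ)) (all x)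
    push_cast at h
    exact h

lemma decay_root {z : ℝ} (hz : z < 0 ∨ 2 < z) :
    ∃ s : ℝ, s ≠ 0 ∧ |s| < 1 ∧ s^2 - 2*(1-z)*s + 1 = 0 := by
  rcases hz with h | h
  · set t := Real.sqrt ((1-z)^2 - 1) with ht
    have ht0 : 0 ≤ t := Real.sqrt_nonneg _
    have ht2 : t^2 = (1-z)^2 - 1 := Real.sq_sqrt (by nlinarith)
    have hpos : 0 < 1 - z - t := by nlinarith [mul_pos (by nlinarith : (0:ℝ) < 1-z+t) (by nlinarith : (0:ℝ) < 1-z)]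
    refine ⟨1 - z - t, by positivity, ?_, by linear_combination ht2⟩
    rw [abs_lt]
    exact ⟨by linarith, by nlinarith⟩
  · set t := Real.sqrt ((1-z)^2 - 1) with ht
    have ht0 : 0 ≤ t := Real.sqrt_nonneg _
    have ht2 : t^2 = (1-z)^2 - 1 := Real.sq_sqrt (by nlinarith)
    have hneg : 1 - z + t < 0 := by nlinarith [mul_pos (by nlinarith : (0:ℝ) < z-1+t) (by nlinarith : (0:ℝ) < z-1)]
    refine ⟨1 - z + t, by intro h0; rw [h0] at hneg; exact lt_irrefl 0 hneg, ?_, by linear_combination ht2⟩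
    rw [abs_lt]
    exact ⟨by nlinarith, by linarith⟩

lemma eig_root (lam z : ℝ) (hz : z < 0 ∨ 2 < z) (h : IsEvenEigenvalue 0 lam z) :
    ∃ s : ℝ, s ≠ 0 ∧ |s| < 1 ∧ lam * s * (s^2+1) = s^2 - 1 ∧ 1 - (s + s⁻¹)/2 = z := by
  obtain ⟨ψ, hne, hev, heq⟩ := h
  obtain ⟨s, hs0, hsabs, hsq⟩ := decay_root hz
  obtain ⟨hsl, hsu⟩ := abs_lt.1 hsabs
  have h1z : (1:ℝ) - z ≠ 0 := by rcases hz with h|h <;> intro h0 <;> linarith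
  have hzf : 1 - (s + s⁻¹)/2 = z := by
    field_simp
    linear_combination -hsq
  refine ⟨s, hs0, hsabs, ?_, hzf⟩
  -- complex setup
  obtain ⟨u, hu⟩ : ∃ u : ℂ, u = (s:ℂ) := ⟨_, rfl⟩
  have hu0 : u ≠ 0 := by rw [hu]; exact Complex.ofReal_ne_zero.2 hs0
  have hu2 : u^2 - 2*(1-(z:ℂ))*u + 1 = 0 := by
    have h' := congrArg (fun t : ℝ => (t:ℂ)) hsq
    push_cast at h'
    rw [hu]
    exact h'
  obtain ⟨w, huw⟩ : ∃ w : ℂ, u * w = 1 := ⟨u⁻¹, mul_inv_cancel₀ hu0⟩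
  have hw2 : w^2 - 2*(1-(z:ℂ))*w + 1 = 0 := by
    have h2 : u^2 * (w^2 - 2*(1-(z:ℂ))*w + 1) = 0 := by
      linear_combination hu2 + (u*w + 1 - 2*(1-(z:ℂ))*u)*huw
    rcases mul_eq_zero.1 h2 with h' | h'
    · exact absurd (pow_eq_zero_iff (two_ne_zero) |>.1 h') hu0
    · exact h'
  -- pot values
  have hpot0 : pot 0 lam 0 = 0 := by simp [pot]
  have hpot1 : pot 0 lam 1 = lam/2 := by norm_num [pot]
  have hpotn : ∀ x : ℤ, 2 ≤ x → pot 0 lam x = 0 := by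
    intro x hx; unfold pot; rw [if_neg (by omega), if_neg (by omega)]
  -- recurrence
  have hrec : ∀ n : ℕ, ψ ((n:ℤ)+3) = 2*(1-(z:ℂ))*ψ ((n:ℤ)+2) - ψ ((n:ℤ)+1) := by
    intro n
    have h := heq ((n:ℤ)+2)
    rw [hpotn _ (by omega)] at h
    rw [show (n:ℤ)+2+1 = (n:ℤ)+3 by ring, show (n:ℤ)+2-1 = (n:ℤ)+1 by ring] at h
    push_cast at h
    linear_combination (-2:ℂ)*h
  -- coefficients A B
  have hwu : w - u ≠ 0 := by
    intro h0
    have hwu' : w = u := sub_eq_zero.1 h0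
    rw [hwu'] at huw
    simp only [hu] at huw
    have hs2 : s*s = 1 := by exact_mod_cast huw
    nlinarith
  obtain ⟨A, B, hA1, hA2⟩ : ∃ A B : ℂ, A*u + B*w = ψ 1 ∧ A*u^2 + B*w^2 = ψ 2 := by
    refine ⟨(ψ 1 * w^2 - ψ 2 * w)/(w - u), (ψ 2 * u - ψ 1 * u^2)/(w - u), ?_, ?_⟩
    · field_simp
      linear_combination (ψ 1 * (w - u))*huw
    · field_simp
      linear_combination ((ψ 2 * u * w + ψ 2) * (w - u))*huw - (ψ 2 * u * w * (w - u))*huw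
  -- general solution of the recurrence
  have hgen : ∀ n : ℕ, ψ ((n:ℤ)+1) = A*u^(n+1) + B*w^(n+1) ∧
      ψ ((n:ℤ)+2) = A*u^(n+2) + B*w^(n+2) := by
    intro n
    induction n with
    | zero =>
      constructor
      · simpa using hA1.symm
      · simpa using hA2.symm
    | succ k ih =>
      obtain ⟨ih1, ih2⟩ := ih
      constructor
      · rw [show ((k+1:ℕ):ℤ)+1 = (k:ℤ)+2 by push_cast; ring]
        exact ih2
      · rw [show ((k+1:ℕ):ℤ)+2 = (k:ℤ)+3 by push_cast; ring]
        have h3 := hrec k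
        linear_combination h3 + 2*(1-(z:ℂ))*ih2 - ih1 - A*u^(k+1)*hu2 - B*w^(k+1)*hw2
  -- psi tends to zero along the positive integers
  have hten : Tendsto (fun n : ℕ => (ψ ((n:ℤ)+1) : ℂ)) atTop (nhds 0) := by
    have hsummable : Summable fun x : ℤ => ‖ψ x‖ ^ ((2:ENNReal).toReal) :=
      (lp.memℓp ψ).summable (by norm_num)
    have h1 : Tendsto (fun x : ℤ => ‖ψ x‖ ^ ((2:ENNReal).toReal)) cofinite (nhds 0) :=
      hsummable.tendsto_cofinite_zero
    have hinj : Function.Injective (fun n : ℕ => (n:ℤ)+1) := by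
      intro a b hab; simpa using hab
    have h2 : Tendsto (fun n : ℕ => (n:ℤ)+1) atTop cofinite := by
      rw [← Nat.cofinite_eq_atTop]; exact hinj.tendsto_cofinite
    have h3 : Tendsto (fun n : ℕ => ‖ψ ((n:ℤ)+1)‖ ^ ((2:ENNReal).toReal)) atTop (nhds 0) :=
      h1.comp h2
    have h4 : Tendsto (fun n : ℕ => ‖ψ ((n:ℤ)+1)‖) atTop (nhds 0) := by
      have h5 := (Real.continuous_sqrt.tendsto 0).comp h3
      rw [Real.sqrt_zero] at h5
      convert h5 using 2 with n
      simp only [Function.comp_apply]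
      rw [show ((2:ENNReal).toReal) = (2:ℝ) by norm_num, show ‖ψ ((n:ℤ)+1)‖ ^ (2:ℝ) = ‖ψ ((n:ℤ)+1)‖^(2:ℕ) by rw [← Real.rpow_natCast]; norm_num]
      rw [Real.sqrt_sq (norm_nonneg _)]
    exact tendsto_zero_iff_norm_tendsto_zero.2 h4
  -- the growing branch must vanish
  have hB0 : B = 0 := by
    by_contra hB
    have hults : ‖u‖ < 1 := by rw [hu, Complex.norm_real, Real.norm_eq_abs]; exact hsabs
    have hAu : Tendsto (fun n : ℕ => A*u^(n+1)) atTop (nhds 0) := by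
      have h6 : Tendsto (fun n : ℕ => u^n) atTop (nhds 0) :=
        tendsto_pow_atTop_nhds_zero_of_norm_lt_one hults
      have h7 : Tendsto (fun n : ℕ => u^(n+1)) atTop (nhds 0) :=
        h6.comp (tendsto_add_atTop_nat 1)
      simpa using h7.const_mul A
    have hBw : Tendsto (fun n : ℕ => B*w^(n+1)) atTop (nhds 0) := by
      have heqn : (fun n : ℕ => B*w^(n+1)) = fun n : ℕ => ψ ((n:ℤ)+1) - A*u^(n+1) := by
        funext n; rw [(hgen n).1]; ring
      rw [heqn]
      simpa using hten.sub hAu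
    have hw1 : 1 ≤ ‖w‖ := by
      have : ‖u‖ * ‖w‖ = 1 := by rw [← norm_mul, huw, norm_one]
      nlinarith [norm_nonneg w, norm_nonneg u]
    have hlb : ∀ n : ℕ, ‖B‖ ≤ ‖B*w^(n+1)‖ := by
      intro n
      rw [norm_mul, norm_pow]
      exact le_mul_of_one_le_right (norm_nonneg _) (one_le_pow₀ hw1)
    have hBpos : 0 < ‖B‖ := norm_pos_iff.2 hB
    have hnorm0 : Tendsto (fun n : ℕ => ‖B*w^(n+1)‖) atTop (nhds 0) := by
      have := hBw.norm
      simpa using this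
    have hev' : ∀ᶠ n : ℕ in atTop, ‖B*w^(n+1)‖ < ‖B‖ :=
      hnorm0.eventually (eventually_lt_nhds hBpos)
    obtain ⟨n, hn⟩ := hev'.exists
    exact absurd (hlb n) (not_le.2 hn)
  have hpsi : ∀ n : ℕ, (ψ ((n:ℤ)+1) : ℂ) = A*u^(n+1) := by
    intro n
    rw [(hgen n).1, hB0]
    ring
  -- A is nonzero
  have hψ1 : (ψ (1:ℤ) : ℂ) = A*u := by
    have h' := hpsi 0
    norm_num at h'
    exact h'
  have hψ2 : (ψ (2:ℤ) : ℂ) = A*u^2 := by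
    have h' := hpsi 1
    norm_num at h'
    exact h'
  have e0 := heq 0
  rw [hpot0] at e0
  rw [show (0:ℤ)+1 = 1 by ring, show (0:ℤ)-1 = -1 by ring, show (-1 : ℤ) = -(1:ℤ) by ring, hev 1] at e0
  push_cast at e0
  have e1 := heq 1
  rw [hpot1] at e1
  rw [show (1:ℤ)+1 = 2 by ring, show (1:ℤ)-1 = 0 by ring] at e1
  push_cast at e1
  have hA0 : A ≠ 0 := by
    intro hA
    apply hne
    have hp : ∀ n : ℕ, (ψ ((n:ℤ)+1) : ℂ) = 0 := by
      intro n; rw [hpsi n, hA, zero_mul]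
    have h0' : (ψ (0:ℤ) : ℂ) = 0 := by
      have h1' : (ψ (1:ℤ) : ℂ) = 0 := by rw [hψ1, hA, zero_mul]
      have hc : (1 - (z:ℂ)) ≠ 0 := by
        intro hc0
        apply h1z
        exact_mod_cast hc0
      have : (1 - (z:ℂ)) * (ψ (0:ℤ) : ℂ) = 0 := by
        linear_combination e0 + h1'
      exact (mul_eq_zero.1 this).resolve_left hc
    rw [lp.eq_zero_iff_coeFn_eq_zero]
    funext x
    show (ψ x : ℂ) = 0
    rcases lt_trichotomy x 0 with hx | hx | hx
    · have hxe := hev (-x)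
      rw [neg_neg] at hxe
      rw [hxe]
      obtain ⟨n, hn⟩ : ∃ n : ℕ, -x = (n:ℤ)+1 := ⟨(-x-1).toNat, by omega⟩
      rw [hn]; exact hp n
    · rw [hx]; exact h0'
    · obtain ⟨n, hn⟩ : ∃ n : ℕ, x = (n:ℤ)+1 := ⟨(x-1).toNat, by omega⟩
      rw [hn]; exact hp n
  rw [hψ1] at e0
  rw [hψ1, hψ2] at e1
  have E : A * ((lam:ℂ)*u*(u^2+1) - (u^2-1)) = 0 := by
    linear_combination (4*u*(1-(z:ℂ)))*e1 + (2*u)*e0 + (A*(1+2*u+(lam:ℂ)*u-2*u*(z:ℂ)))*hu2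
  have E2 : (lam:ℂ)*u*(u^2+1) - (u^2-1) = 0 := (mul_eq_zero.1 E).resolve_left hA0
  rw [hu] at E2
  have E3 : lam*s*(s^2+1) - (s^2-1) = 0 := by exact_mod_cast E2
  linarith

/-- For every `λ ≠ 0`, the operator `H_{0λ}` has exactly one even eigenvalue `ζ(λ)`
outside `[0,2]`; moreover `ζ(λ) ∈ (2, +∞)` if `λ > 0`, and `ζ(λ) ∈ (−∞, 0)` if `λ < 0`. -/
theorem unique_even_eigenvalue_H0lam (lam : ℝ) (hlam : lam ≠ 0) :
    ∃ ζ : ℝ, ((ζ < 0 ∨ 2 < ζ) ∧ IsEvenEigenvalue 0 lam ζ) ∧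
      (∀ z : ℝ, (z < 0 ∨ 2 < z) → IsEvenEigenvalue 0 lam z → z = ζ) ∧
      (0 < lam → 2 < ζ) ∧ (lam < 0 → ζ < 0) := by
  obtain ⟨r, hr0, hrabs, hreq⟩ := root_exists lam hlam
  obtain ⟨hrl, hru⟩ := abs_lt.1 hrabs
  have hinv : r * r⁻¹ = 1 := mul_inv_cancel₀ hr0
  have hbig : r < 0 → 2 < 1 - (r + r⁻¹)/2 := by
    intro hrneg
    have h1 : (0:ℝ) < r + 1 := by linarith
    have h2 : r + r⁻¹ < -2 := by nlinarith [mul_pos h1 h1]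
    linarith
  have hsmall : 0 < r → 1 - (r + r⁻¹)/2 < 0 := by
    intro hrpos
    have h1 : (0:ℝ) < 1 - r := by linarith
    have h2 : 2 < r + r⁻¹ := by nlinarith [mul_pos h1 h1]
    linarith
  have hr2 : r^2 < 1 := by nlinarith
  have hrsign : (0 < lam → r < 0) ∧ (lam < 0 → 0 < r) := by
    constructor <;> intro hl
    · rcases lt_or_gt_of_ne hr0 with h | h
      · exact h
      · nlinarith [mul_pos (mul_pos hl h) (by positivity : (0:ℝ) < r^2+1)]
    · rcases lt_or_gt_of_ne hr0 with h | h
      · nlinarith [mul_pos (mul_pos (by linarith : (0:ℝ) < -lam) (by linarith : (0:ℝ) < -r)) (by positivity : (0:ℝ) < r^2+1)]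
      · exact h
  refine ⟨1 - (r + r⁻¹)/2, ⟨?_, construct lam r hr0 hrabs hreq⟩, ?_, ?_, ?_⟩
  · rcases lt_or_gt_of_ne hr0 with h | h
    · exact Or.inr (hbig h)
    · exact Or.inl (hsmall h)
  · intro z hzout hzeig
    obtain ⟨s, hs0, hsabs, hseq, hsz⟩ := eig_root lam z hzout hzeig
    have hsr : s = r := root_unique hsabs hrabs hseq hreq
    rw [← hsz, hsr]
  · intro hl
    exact hbig (hrsign.1 hl)
  · intro hl
    exact hsmall (hrsign.2 hl)
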